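/- arXiv:2312.09892 — 2 statements merged into one kernel-verified Lean document; each statement's English description precedes it below -/
import Mathlib

section
/- Let a, b, c be real numbers with a > 0. Every complex root w of the quadratic polynomial a w² + b w + c has strictly negative real part if and only if b > 0 and c > 0. -/
open Complex in
lemma rh_quad_root_iff (a b c x y : ℝ) :
    ((a : ℂ) * ((x : ℂ) + (y : ℂ) * Complex.I) ^ 2 + (b : ℂ) * ((x : ℂ) + (y : ℂ) * Complex.I) + (c : ℂ) = 0) ↔
      (a * (x ^ 2 - y ^ 2) + b * x + c = 0 ∧ 2 * a * x * y + b * y = 0) := by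
  rw [Complex.ext_iff]
  constructor <;> intro h <;>
    simp only [Complex.add_re, Complex.add_im, Complex.mul_re, Complex.mul_im,
      Complex.ofReal_re, Complex.ofReal_im, Complex.zero_re, Complex.zero_im,
      Complex.I_re, Complex.I_im, pow_two] at h ⊢ <;>
    constructor <;> nlinarith [h.1, h.2]

/-- Routh–Hurwitz criterion for real quadratics: all complex roots of
`a w² + b w + c` (with `a > 0`) have negative real part iff `b > 0` and `c > 0`. -/
theorem routh_hurwitz_quadratic (a b c : ℝ) (ha : 0 < a) :
    (∀ w : ℂ, (a : ℂ) * w ^ 2 + (b : ℂ) * w + (c : ℂ) = 0 → w.re < 0) ↔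
      (0 < b ∧ 0 < c) := by
  constructor
  · intro h
    by_cases hΔ : 0 ≤ b ^ 2 - 4 * a * c
    · set s := Real.sqrt (b ^ 2 - 4 * a * c) with hs
      have hs2 : s ^ 2 = b ^ 2 - 4 * a * c := Real.sq_sqrt hΔ
      have hs0 : 0 ≤ s := Real.sqrt_nonneg _
      set x1 := (-b + s) / (2 * a) with hx1
      set x2 := (-b - s) / (2 * a) with hx2
      have h1 : x1 < 0 := by
        have := h ((x1 : ℝ) + (0 : ℝ) * Complex.I)
        rw [rh_quad_root_iff] at this
        have hre := this ⟨by rw [hx1]; field_simp; nlinarith, by ring⟩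
        simpa using hre
      have h2 : x2 < 0 := by
        have := h ((x2 : ℝ) + (0 : ℝ) * Complex.I)
        rw [rh_quad_root_iff] at this
        have hre := this ⟨by rw [hx2]; field_simp; nlinarith, by ring⟩
        simpa using hre
      have hb : s < b := by
        rcases div_neg_iff.mp h1 with ⟨_, h⟩ | ⟨h, _⟩ <;> nlinarith
      constructor
      · linarith
      · nlinarith
    · push_neg at hΔ
      have hc : 0 < c := by nlinarith
      refine ⟨?_, hc⟩
      set s := Real.sqrt (4 * a * c - b ^ 2) with hs
      have hs2 : s ^ 2 = 4 * a * c - b ^ 2 := Real.sq_sqrt (by linarith)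
      set x0 := -b / (2 * a) with hx0
      set t := s / (2 * a) with ht
      have := h ((x0 : ℝ) + (t : ℝ) * Complex.I)
      rw [rh_quad_root_iff] at this
      have hre := this ⟨by rw [hx0, ht]; field_simp; nlinarith, by rw [hx0, ht]; field_simp; ring⟩
      have hx : x0 < 0 := by simpa using hre
      rw [hx0] at hx
      rcases div_neg_iff.mp hx with ⟨_, h'⟩ | ⟨h', _⟩ <;> nlinarith
  · rintro ⟨hb, hc⟩ w hw
    obtain ⟨x, y⟩ := w
    rw [Complex.mk_eq_add_mul_I] at hw
    obtain ⟨h1, h2⟩ := (rh_quad_root_iff a b c x y).mp hw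
    show x < 0
    rcases mul_eq_zero.mp (show (2 * a * x + b) * y = 0 by linarith) with h | h
    · nlinarith
    · by_contra hx
      push_neg at hx
      rw [h] at h1
      nlinarith [mul_nonneg ha.le (sq_nonneg x), mul_nonneg hb.le hx]
end

section
/- Let a₃, a₂, a₁, a₀ be real numbers with a₃ > 0. Every complex root w of the cubic polynomial a₃ w³ + a₂ w² + a₁ w + a₀ has strictly negative real part if and only if a₂ > 0, a₁ > 0, a₀ > 0, and a₂ a₁ > a₀ a₃. -/
lemma cubic_real_root (a₃ a₂ a₁ a₀ : ℝ) (ha₃ : 0 < a₃) :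
    ∃ r : ℝ, a₃ * r ^ 3 + a₂ * r ^ 2 + a₁ * r + a₀ = 0 := by
  obtain ⟨M, hM1, hMa⟩ : ∃ M : ℝ, 1 ≤ M ∧ a₃ * M ≥ a₃ + |a₂| + |a₁| + |a₀| := by
    refine ⟨1 + (|a₂| + |a₁| + |a₀|) / a₃, ?_, ?_⟩
    · have : 0 ≤ (|a₂| + |a₁| + |a₀|) / a₃ := by positivity
      linarith
    · rw [mul_add, mul_one, mul_div_cancel₀ _ ha₃.ne']
      linarith
  have h2 : |a₂| ≥ a₂ := le_abs_self _
  have h2' : |a₂| ≥ -a₂ := neg_le_abs _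
  have h1 : |a₁| ≥ a₁ := le_abs_self _
  have h1' : |a₁| ≥ -a₁ := neg_le_abs _
  have h0 : |a₀| ≥ a₀ := le_abs_self _
  have h0' : |a₀| ≥ -a₀ := neg_le_abs _
  have hpos : 0 < a₃ * M ^ 3 + a₂ * M ^ 2 + a₁ * M + a₀ := by
    nlinarith [abs_nonneg a₂, abs_nonneg a₁, abs_nonneg a₀, sq_nonneg M,
      mul_le_mul_of_nonneg_right hMa (sq_nonneg M)]
  have hneg : a₃ * (-M) ^ 3 + a₂ * (-M) ^ 2 + a₁ * (-M) + a₀ < 0 := by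
    nlinarith [abs_nonneg a₂, abs_nonneg a₁, abs_nonneg a₀, sq_nonneg M,
      mul_le_mul_of_nonneg_right hMa (sq_nonneg M)]
  have hc : ContinuousOn (fun x : ℝ => a₃ * x ^ 3 + a₂ * x ^ 2 + a₁ * x + a₀)
      (Set.Icc (-M) M) := by fun_prop
  obtain ⟨r, _, hr⟩ := intermediate_value_Icc (by linarith : -M ≤ M) hc
    ⟨hneg.le, hpos.le⟩
  exact ⟨r, hr⟩

lemma cubic_factor (a₃ a₂ a₁ a₀ r : ℝ)
    (hr : a₃ * r ^ 3 + a₂ * r ^ 2 + a₁ * r + a₀ = 0) (z : ℂ)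
    (hz : (a₃ : ℂ) * z ^ 2 + ((a₂ : ℂ) + a₃ * r) * z + ((a₁ : ℂ) + a₂ * r + a₃ * r ^ 2) = 0) :
    (a₃ : ℂ) * z ^ 3 + (a₂ : ℂ) * z ^ 2 + (a₁ : ℂ) * z + (a₀ : ℂ) = 0 := by
  have hr' : (a₃ : ℂ) * (r:ℂ) ^ 3 + (a₂:ℂ) * (r:ℂ) ^ 2 + (a₁:ℂ) * r + (a₀:ℂ) = 0 := by
    exact_mod_cast congrArg (Complex.ofReal) hr
  linear_combination (z - (r:ℂ)) * hz + hr'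

/-- Routh–Hurwitz criterion for real cubics: all complex roots of
`a₃ w³ + a₂ w² + a₁ w + a₀` (with `a₃ > 0`) have negative real part iff
`a₂ > 0`, `a₁ > 0`, `a₀ > 0` and `a₂ a₁ > a₀ a₃`. -/
theorem routh_hurwitz_cubic (a₃ a₂ a₁ a₀ : ℝ) (ha₃ : 0 < a₃) :
    (∀ w : ℂ, (a₃ : ℂ) * w ^ 3 + (a₂ : ℂ) * w ^ 2 + (a₁ : ℂ) * w + (a₀ : ℂ) = 0 →
        w.re < 0) ↔
      (0 < a₂ ∧ 0 < a₁ ∧ 0 < a₀ ∧ a₀ * a₃ < a₂ * a₁) := by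
  constructor
  · intro h
    obtain ⟨r, hr⟩ := cubic_real_root a₃ a₂ a₁ a₀ ha₃
    have hr0 : r < 0 := by
      have := h (r : ℂ) (by exact_mod_cast congrArg (Complex.ofReal) hr)
      simpa using this
    obtain ⟨p, hp⟩ : ∃ p : ℝ, p = a₂ + a₃ * r := ⟨_, rfl⟩
    obtain ⟨q, hq⟩ : ∃ q : ℝ, q = a₁ + a₂ * r + a₃ * r ^ 2 := ⟨_, rfl⟩
    have key : ∀ z : ℂ, (a₃ : ℂ) * z ^ 2 + (p : ℂ) * z + (q : ℂ) = 0 → z.re < 0 := by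
      intro z hz
      apply h z
      apply cubic_factor a₃ a₂ a₁ a₀ r hr z
      push_cast [hp, hq] at hz ⊢
      linear_combination hz
    have hpq : 0 < p ∧ 0 < q := by
      rcases le_or_gt (p ^ 2 - 4 * a₃ * q) 0 with hD | hD
      · -- complex (or double) roots: use z = -p/(2a₃) + i t/(2a₃)
        set t : ℝ := Real.sqrt (4 * a₃ * q - p ^ 2) with htdef
        have ht2 : t ^ 2 = 4 * a₃ * q - p ^ 2 := Real.sq_sqrt (by linarith)
        set z : ℂ := ((-p / (2 * a₃) : ℝ) : ℂ) + ((t / (2 * a₃) : ℝ) : ℂ) * Complex.I with hzdef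
        have hz : (a₃ : ℂ) * z ^ 2 + (p : ℂ) * z + (q : ℂ) = 0 := by
          rw [hzdef]
          apply Complex.ext <;>
            simp only [Complex.add_re, Complex.add_im, Complex.mul_re, Complex.mul_im,
              Complex.ofReal_re, Complex.ofReal_im, Complex.I_re, Complex.I_im, pow_two,
              Complex.zero_re, Complex.zero_im, mul_zero, zero_mul, mul_one, sub_zero,
              add_zero, zero_add, zero_sub, neg_zero] <;>
            field_simp <;> ring_nf <;> nlinarith [ht2]
        have hre := key z hz
        have hzre : z.re = -p / (2 * a₃) := by
          rw [hzdef]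
          simp only [Complex.add_re, Complex.mul_re, Complex.ofReal_re, Complex.ofReal_im,
            Complex.I_re, Complex.I_im, mul_zero, zero_mul, mul_one, sub_zero, add_zero,
            zero_sub, neg_zero]
        rw [hzre] at hre
        have hppos : 0 < p := by
          rw [div_neg_iff] at hre
          rcases hre with ⟨h1, _⟩ | ⟨_, h2⟩
          · linarith
          · linarith
        refine ⟨hppos, ?_⟩
        nlinarith
      · -- real roots of the quadratic
        set s : ℝ := Real.sqrt (p ^ 2 - 4 * a₃ * q) with hsdef
        have hs2 : s ^ 2 = p ^ 2 - 4 * a₃ * q := Real.sq_sqrt hD.le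
        have hsnn : 0 ≤ s := Real.sqrt_nonneg _
        have quadroot : ∀ e : ℝ, e ^ 2 = p ^ 2 - 4 * a₃ * q →
            ((-p + e) / (2 * a₃)) < 0 := by
          intro e he
          have hz : (a₃ : ℂ) * (((-p + e) / (2 * a₃) : ℝ) : ℂ) ^ 2
              + (p : ℂ) * (((-p + e) / (2 * a₃) : ℝ) : ℂ) + (q : ℂ) = 0 := by
            have : a₃ * ((-p + e) / (2 * a₃)) ^ 2 + p * ((-p + e) / (2 * a₃)) + q = 0 := by
              field_simp
              nlinarith [he]
            exact_mod_cast congrArg (Complex.ofReal) this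
          have := key _ hz
          simpa only [Complex.ofReal_re] using this
        have h1 := quadroot s hs2
        have h2 := quadroot (-s) (by rw [neg_pow]; simpa using hs2)
        have h1' : -p + s < 0 := by
          rcases div_neg_iff.mp h1 with ⟨ha, hb⟩ | ⟨ha, hb⟩ <;> linarith
        have hppos : 0 < p := by linarith
        refine ⟨hppos, ?_⟩
        nlinarith [hs2, hsnn, h1']
      -- done
    obtain ⟨hppos, hqpos⟩ := hpq
    have hA2 : 0 < a₂ := by nlinarith [mul_pos ha₃ (neg_pos.mpr hr0)]
    have hA1 : 0 < a₁ := by nlinarith [mul_pos hppos (neg_pos.mpr hr0)]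
    have hA0 : 0 < a₀ := by nlinarith [mul_pos hqpos (neg_pos.mpr hr0)]
    refine ⟨hA2, hA1, hA0, ?_⟩
    have ha2e : a₂ = p - a₃ * r := by rw [hp]; ring
    have ha1e : a₁ = q - p * r := by rw [hq, hp]; ring
    have ha0e : a₀ = -q * r := by rw [hq]; linear_combination hr
    have hid : a₂ * a₁ - a₀ * a₃ = p * (q - p * r + a₃ * r ^ 2) := by
      rw [ha2e, ha1e, ha0e]; ring
    have hfac : 0 < q - p * r + a₃ * r ^ 2 := by
      nlinarith [mul_pos hppos (neg_pos.mpr hr0), mul_nonneg ha₃.le (sq_nonneg r)]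
    nlinarith [mul_pos hppos hfac]
  · rintro ⟨h2, h1, h0, hd⟩ w hw
    by_contra hx
    push_neg at hx
    set x : ℝ := w.re with hxd
    set y : ℝ := w.im with hyd
    rw [Complex.ext_iff] at hw
    obtain ⟨hre0, him0⟩ := hw
    simp only [Complex.add_re, Complex.add_im, Complex.mul_re, Complex.mul_im,
      Complex.ofReal_re, Complex.ofReal_im, pow_succ, pow_zero, one_mul,
      Complex.one_re, Complex.one_im, Complex.zero_re, Complex.zero_im,
      zero_mul, mul_zero, zero_sub, sub_zero, zero_add, add_zero, neg_zero] at hre0 him0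
    have hre : a₃ * (x ^ 3 - 3 * x * y ^ 2) + a₂ * (x ^ 2 - y ^ 2) + a₁ * x + a₀ = 0 := by
      linear_combination hre0
    have him : y * (3 * a₃ * x ^ 2 - a₃ * y ^ 2 + 2 * a₂ * x + a₁) = 0 := by
      linear_combination him0
    rcases eq_or_ne y 0 with hy | hy
    · rw [hy] at hre
      nlinarith [mul_nonneg ha₃.le (pow_nonneg hx 3), mul_nonneg h2.le (sq_nonneg x),
        mul_nonneg h1.le hx]
    · have hS : 3 * a₃ * x ^ 2 - a₃ * y ^ 2 + 2 * a₂ * x + a₁ = 0 :=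
        mul_left_cancel₀ hy (by linear_combination him)
      have key : a₀ * a₃ - a₂ * a₁ =
          8 * a₃ ^ 2 * x ^ 3 + 8 * a₂ * a₃ * x ^ 2 + 2 * a₁ * a₃ * x + 2 * a₂ ^ 2 * x := by
        linear_combination a₃ * hre - (3 * a₃ * x + a₂) * hS
      nlinarith [mul_nonneg (pow_nonneg ha₃.le 2) (pow_nonneg hx 3),
        mul_nonneg (mul_nonneg h2.le ha₃.le) (sq_nonneg x),
        mul_nonneg (mul_nonneg h1.le ha₃.le) hx,
        mul_nonneg (sq_nonneg a₂) hx]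
end
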